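/- Let A be a C*-algebra, E ⊆ A a selfadjoint subspace, n ∈ ℕ, and X ∈ Mₙ(E) selfadjoint. Then Metric.infDist X Mₙ(E)₊ = sSup { −Re(φ X) : φ a contractive positive functional on Mₙ(E) }. (The set on the right is nonempty, as it contains 0 coming from the zero functional, and is bounded above by ‖X‖.) -/

import Mathlib

open scoped ComplexOrder

noncomputable section

/-- The `n`-th matrix level `Mₙ(E)` of a subspace `E` of a C*-algebra `A`, realized inside a
C*-algebra `M` which is given together with a ⋆-algebra isomorphism
`e : Mₙ(A) ≃⋆ₐ[ℂ] M` (recall that the C*-norm on `Mₙ(A)` is unique, so this fully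
determines the norm and order structure of `Mₙ(E)`). -/
def matrixLevel {A M : Type*} [NonUnitalCStarAlgebra A] [NonUnitalCStarAlgebra M] {n : ℕ}
    (E : Submodule ℂ A) (e : Matrix (Fin n) (Fin n) A ≃⋆ₐ[ℂ] M) : Submodule ℂ M where
  carrier := {X : M | ∀ i j, e.symm X i j ∈ E}
  add_mem' := by
    intro a b ha hb i j
    rw [map_add, Matrix.add_apply]
    exact E.add_mem (ha i j) (hb i j)
  zero_mem' := by
    intro i j
    rw [map_zero]
    exact E.zero_mem
  smul_mem' := by
    intro c a ha i j
    rw [map_smul, Matrix.smul_apply]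
    exact E.smul_mem c (ha i j)

/-- `φ` is a (selfadjoint) positive functional on the subspace `S` of a C*-algebra:
it is star-preserving and takes nonnegative (real) values on the positive elements of `S`. -/
def IsPositiveFunctional {B : Type*} [NonUnitalCStarAlgebra B] [PartialOrder B]
    (S : Submodule ℂ B) (φ : S →L[ℂ] ℂ) : Prop :=
  (∀ (x : B) (hx : x ∈ S) (hsx : star x ∈ S), φ ⟨star x, hsx⟩ = starRingEnd ℂ (φ ⟨x, hx⟩)) ∧
    ∀ (x : B) (hx : x ∈ S), 0 ≤ x → 0 ≤ φ ⟨x, hx⟩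

lemma my_real_smul_nonneg {M : Type*} [NonUnitalCStarAlgebra M] [PartialOrder M]
    [StarOrderedRing M] {t : ℝ} (ht : 0 ≤ t) {x : M} (hx : 0 ≤ x) : 0 ≤ t • x := by
  rw [StarOrderedRing.nonneg_iff] at hx ⊢
  induction hx using AddSubmonoid.closure_induction with
  | mem y hy =>
    obtain ⟨s, rfl⟩ := hy
    refine AddSubmonoid.subset_closure ⟨(Real.sqrt t : ℂ) • s, ?_⟩
    show star _ * _ = t • (star s * s)
    rw [star_smul, smul_mul_smul_comm, Complex.star_def, Complex.conj_ofReal,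
      ← Complex.ofReal_mul, Real.mul_self_sqrt ht, Complex.coe_smul]
  | zero => rw [smul_zero]; exact AddSubmonoid.zero_mem _
  | add y z _ _ hy hz => rw [smul_add]; exact AddSubmonoid.add_mem _ hy hz

theorem aux {M : Type*} [NonUnitalCStarAlgebra M] [PartialOrder M] [StarOrderedRing M]
    (S : Submodule ℂ M) (X : M) (hXS : X ∈ S) (hX : IsSelfAdjoint X) :
    Metric.infDist X {Y : M | Y ∈ S ∧ 0 ≤ Y} =
      sSup {r : ℝ | ∃ φ : S →L[ℂ] ℂ,
        IsPositiveFunctional S φ ∧ ‖φ‖ ≤ 1 ∧ r = -(φ ⟨X, hXS⟩).re} := by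
  set C : Set M := {Y : M | Y ∈ S ∧ 0 ≤ Y} with hC
  set Φ : Set ℝ := {r : ℝ | ∃ φ : S →L[ℂ] ℂ,
        IsPositiveFunctional S φ ∧ ‖φ‖ ≤ 1 ∧ r = -(φ ⟨X, hXS⟩).re} with hΦ
  have hC0 : (0 : M) ∈ C := ⟨S.zero_mem, le_refl 0⟩
  have hCne : C.Nonempty := ⟨0, hC0⟩
  have h0Φ : (0 : ℝ) ∈ Φ := by
    refine ⟨0, ⟨fun x hx hsx => by
      simp only [ContinuousLinearMap.zero_apply, map_zero], fun x hx hx' => le_refl _⟩,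
      by exact ContinuousLinearMap.opNorm_le_bound _ zero_le_one (by simp),
      by rw [ContinuousLinearMap.zero_apply, Complex.zero_re, neg_zero]⟩
  -- every element of Φ is ≤ infDist
  have hub : ∀ r ∈ Φ, r ≤ Metric.infDist X C := by
    rintro r ⟨φ, ⟨hstar, hpos⟩, hnorm, rfl⟩
    by_contra hlt
    push_neg at hlt
    obtain ⟨Y, hY, hYd⟩ := (Metric.infDist_lt_iff hCne).mp hlt
    have h1 : 0 ≤ (φ ⟨Y, hY.1⟩).re := (Complex.le_def.mp (hpos Y hY.1 hY.2)).1
    have h2 : (φ (⟨Y, hY.1⟩ - ⟨X, hXS⟩)).re ≤ ‖φ (⟨Y, hY.1⟩ - ⟨X, hXS⟩)‖ :=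
      Complex.re_le_norm _
    have h3 : ‖φ (⟨Y, hY.1⟩ - ⟨X, hXS⟩)‖ ≤ ‖φ‖ * ‖(⟨Y, hY.1⟩ - ⟨X, hXS⟩ : S)‖ :=
      φ.le_opNorm _
    have h4 : ‖(⟨Y, hY.1⟩ - ⟨X, hXS⟩ : S)‖ = ‖Y - X‖ := rfl
    have h5 : (φ (⟨Y, hY.1⟩ - ⟨X, hXS⟩)).re
        = (φ ⟨Y, hY.1⟩).re - (φ ⟨X, hXS⟩).re := by
      rw [map_sub, Complex.sub_re]
    have h6 : ‖Y - X‖ = dist X Y := by rw [dist_eq_norm, norm_sub_rev]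
    have h7 : ‖φ‖ * ‖Y - X‖ ≤ 1 * dist X Y := by
      rw [h6]; exact mul_le_mul_of_nonneg_right hnorm dist_nonneg |>.trans (le_refl _)
    nlinarith [dist_nonneg (x := X) (y := Y)]
  have hΦbdd : BddAbove Φ := ⟨_, fun r hr => hub r hr⟩
  have hΦne : Φ.Nonempty := ⟨0, h0Φ⟩
  refine le_antisymm ?_ (csSup_le hΦne hub)
  set d := Metric.infDist X C with hd'
  rcases le_or_gt d 0 with hd | hd
  · exact hd.trans (le_csSup hΦbdd h0Φ)
  -- d > 0 : separation argument
  have hdisj : Disjoint (Metric.ball X d) C := by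
    rw [Set.disjoint_left]
    intro y hy hyC
    have h1 : d ≤ dist X y := Metric.infDist_le_dist_of_mem hyC
    rw [Metric.mem_ball, dist_comm] at hy
    exact absurd h1 (not_le.mpr hy)
  have hCconv : Convex ℝ C := by
    intro x hx y hy a b ha hb _
    exact ⟨S.add_mem (S.smul_of_tower_mem a hx.1) (S.smul_of_tower_mem b hy.1),
      add_nonneg (my_real_smul_nonneg ha hx.2) (my_real_smul_nonneg hb hy.2)⟩
  obtain ⟨f, u, hfb, hfC⟩ := geometric_hahn_banach_open (convex_ball X d) Metric.isOpen_ball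
    hCconv hdisj
  have hu0 : u ≤ 0 := by simpa using hfC 0 hC0
  have hfX : f X < 0 := lt_of_lt_of_le (hfb X (Metric.mem_ball_self hd)) hu0
  set c : ℝ := -f X with hc
  have hc0 : 0 < c := by rw [hc]; linarith
  have hfC0 : ∀ Y ∈ C, 0 ≤ f Y := by
    intro Y hY
    by_contra h
    push_neg at h
    have ht0 : 0 < (u - 1) / f Y := div_pos_of_neg_of_neg (by linarith) h
    have hmem : ((u - 1) / f Y) • Y ∈ C :=
      ⟨S.smul_of_tower_mem _ hY.1, my_real_smul_nonneg ht0.le hY.2⟩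
    have h2 : u ≤ (u - 1) / f Y * f Y := by
      have := hfC _ hmem
      rwa [map_smul, smul_eq_mul] at this
    rw [div_mul_cancel₀ _ (ne_of_lt h)] at h2
    linarith
  have hkey : ∀ z : M, f z * d ≤ c * ‖z‖ := by
    intro z
    by_contra hcon
    push_neg at hcon
    have hz0 : z ≠ 0 := by
      rintro rfl
      rw [norm_zero, map_zero, zero_mul, mul_zero] at hcon
      exact lt_irrefl 0 hcon
    have hnz : 0 < ‖z‖ := norm_pos_iff.mpr hz0
    have hfz : 0 < f z := by nlinarith [norm_nonneg z]
    set s : ℝ := (c / f z + d / ‖z‖) / 2 with hs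
    have h1 : c / f z < d / ‖z‖ := by rw [div_lt_div_iff₀ hfz hnz]; nlinarith
    have hs1 : c / f z < s := by rw [hs]; linarith
    have hs2 : s < d / ‖z‖ := by rw [hs]; linarith
    have hspos : 0 < s := lt_trans (div_pos hc0 hfz) hs1
    have hball : X + s • z ∈ Metric.ball X d := by
      rw [Metric.mem_ball, dist_eq_norm, add_sub_cancel_left, norm_smul, Real.norm_eq_abs,
        abs_of_pos hspos]
      rw [div_lt_div_iff₀ hfz hnz] at h1
      calc s * ‖z‖ < d / ‖z‖ * ‖z‖ := by exact mul_lt_mul_of_pos_right hs2 hnz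
        _ = d := by field_simp
    have h2 := hfb _ hball
    rw [map_add, map_smul, smul_eq_mul] at h2
    have h3 : c < s * f z := (div_lt_iff₀ hfz).mp hs1
    rw [hc] at h3
    linarith
  have habs' : ∀ y : M, ‖f y‖ * d ≤ c * ‖y‖ := by
    intro y
    rw [Real.norm_eq_abs]
    rcases abs_cases (f y) with ⟨h, _⟩ | ⟨h, _⟩
    · rw [h]; exact hkey y
    · rw [h]
      have := hkey (-y)
      rwa [map_neg, norm_neg] at this
  -- symmetrize and rescale
  have hrsmul : ∀ (r : ℝ) (x : M), star (r • x) = r • star x := fun r x => by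
    rw [← Complex.coe_smul, ← Complex.coe_smul, star_smul, Complex.star_def, Complex.conj_ofReal]
  let T : M →L[ℝ] M :=
    { toFun := star
      map_add' := star_add
      map_smul' := fun r x => by simpa using hrsmul r x
      cont := continuous_star }
  set g : M →L[ℝ] ℝ := (d / (2 * c)) • (f + f.comp T) with hg
  have hgapply : ∀ x : M, g x = d / (2 * c) * (f x + f (star x)) := fun x => rfl
  have hgstar : ∀ x : M, g (star x) = g x := by
    intro x
    rw [hgapply, hgapply, star_star]
    ring
  have hgX : g X = -d := by
    rw [hgapply, hX.star_eq]
    have hfXc : f X = -c := by rw [hc]; ring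
    rw [hfXc]
    field_simp
    ring
  have hgC : ∀ Y ∈ C, 0 ≤ g Y := by
    intro Y hY
    rw [hgapply, (IsSelfAdjoint.of_nonneg hY.2).star_eq]
    have := hfC0 Y hY
    have hpos : (0:ℝ) < d / (2 * c) := by positivity
    nlinarith
  have hgnorm : ∀ x : M, ‖g x‖ ≤ 1 * ‖x‖ := by
    intro x
    rw [hgapply, Real.norm_eq_abs, one_mul]
    have h1 := habs' x
    have h2 := habs' (star x)
    rw [norm_star] at h2
    rw [Real.norm_eq_abs] at h1 h2
    calc |d / (2 * c) * (f x + f (star x))| = d / (2 * c) * |f x + f (star x)| := by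
          rw [abs_mul, abs_of_pos (by positivity)]
      _ ≤ d / (2 * c) * (|f x| + |f (star x)|) :=
          mul_le_mul_of_nonneg_left (abs_add_le _ _) (by positivity)
      _ ≤ ‖x‖ := by
          rw [div_mul_eq_mul_div, div_le_iff₀ (by positivity)]
          nlinarith
  have hgn1 : ‖g‖ ≤ 1 := ContinuousLinearMap.opNorm_le_bound _ zero_le_one hgnorm
  -- extend to a ℂ-linear functional
  set φ₀ : M →L[ℂ] ℂ := g.extendTo𝕜' with hφ₀
  have hφ₀apply : ∀ x : M, φ₀ x = (g x : ℂ) - Complex.I * (g (Complex.I • x) : ℂ) := by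
    intro x
    have h := g.extendTo𝕜'_apply (𝕜 := ℂ) x
    simp at h
    exact h
  have hIsmul : ∀ x : M, star (Complex.I • x) = -(Complex.I • star x) := by
    intro x
    rw [star_smul, Complex.star_def, Complex.conj_I, neg_smul]
  have hskew : ∀ x : M, IsSelfAdjoint x → g (Complex.I • x) = 0 := by
    intro x hx
    have h1 : g (Complex.I • x) = -g (Complex.I • x) := by
      calc g (Complex.I • x) = g (star (Complex.I • x)) := (hgstar _).symm
        _ = g (-(Complex.I • star x)) := by rw [hIsmul]
        _ = -g (Complex.I • star x) := map_neg g _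
        _ = -g (Complex.I • x) := by rw [hx.star_eq]
    linarith
  have hφ₀sa : ∀ x : M, IsSelfAdjoint x → φ₀ x = (g x : ℂ) := by
    intro x hx
    rw [hφ₀apply, hskew x hx]
    simp
  have hφ₀star : ∀ x : M, φ₀ (star x) = starRingEnd ℂ (φ₀ x) := by
    intro x
    rw [hφ₀apply, hφ₀apply, hgstar]
    have h1 : g (Complex.I • star x) = -g (Complex.I • x) := by
      have h2 : Complex.I • star x = -(star (Complex.I • x)) := by rw [hIsmul, neg_neg]
      rw [h2, map_neg, hgstar]
    rw [h1]
    simp only [map_sub, map_mul, Complex.conj_ofReal, Complex.conj_I, Complex.ofReal_neg]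
    ring
  set ψ : S →L[ℂ] ℂ := φ₀.comp S.subtypeL with hψ
  have hψnorm : ‖ψ‖ ≤ 1 := by
    apply ContinuousLinearMap.opNorm_le_bound _ zero_le_one
    intro x
    rw [one_mul]
    have hnx : ‖(x : M)‖ = ‖x‖ := rfl
    calc ‖ψ x‖ = ‖φ₀ (x : M)‖ := rfl
      _ ≤ ‖φ₀‖ * ‖(x : M)‖ := φ₀.le_opNorm _
      _ ≤ 1 * ‖(x : M)‖ := by
          have hne : ‖φ₀‖ = ‖g‖ := g.norm_extendTo𝕜'
          exact mul_le_mul_of_nonneg_right (hne ▸ hgn1) (norm_nonneg _)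
      _ = ‖x‖ := by rw [one_mul, hnx]
  refine le_csSup hΦbdd ⟨ψ, ⟨?_, ?_⟩, hψnorm, ?_⟩
  · intro x hx hsx
    show φ₀ (star x) = starRingEnd ℂ (φ₀ x)
    exact hφ₀star x
  · intro x hx hx0
    show (0:ℂ) ≤ φ₀ x
    rw [hφ₀sa x (IsSelfAdjoint.of_nonneg hx0)]
    exact Complex.zero_le_real.mpr (hgC x ⟨hx, hx0⟩)
  · show d = -(φ₀ X).re
    rw [hφ₀sa X hX, Complex.ofReal_re, hgX, neg_neg]

/-- Let `E` be a selfadjoint subspace of a C*-algebra `A`, let `n ∈ ℕ` and let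
`X ∈ Mₙ(E)` be selfadjoint. Then the distance of `X` to `Mₙ(E)₊` is the supremum of
`-Re (φ X)` over all contractive positive functionals `φ` on `Mₙ(E)`. -/
theorem stmt_2 {A M : Type*} [NonUnitalCStarAlgebra A] [PartialOrder A] [StarOrderedRing A]
    [NonUnitalCStarAlgebra M] [PartialOrder M] [StarOrderedRing M]
    (E : Submodule ℂ A) (hEclosed : IsClosed (E : Set A)) (hEstar : ∀ x ∈ E, star x ∈ E)
    {n : ℕ} (e : Matrix (Fin n) (Fin n) A ≃⋆ₐ[ℂ] M)
    (X : M) (hXE : X ∈ matrixLevel E e) (hX : IsSelfAdjoint X) :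
    Metric.infDist X {Y : M | Y ∈ matrixLevel E e ∧ 0 ≤ Y} =
      sSup {r : ℝ | ∃ φ : (matrixLevel E e) →L[ℂ] ℂ,
        IsPositiveFunctional (matrixLevel E e) φ ∧ ‖φ‖ ≤ 1 ∧ r = -(φ ⟨X, hXE⟩).re} := by
  exact aux (matrixLevel E e) X hXE hX
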